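/- Suppose (G,p) and (G,p′) are two generic complex realisations of a rigid graph G = (V,E). Then (G,p) is radically (respectively quadratically) solvable if and only if (G,p′) is radically (respectively quadratically) solvable. -/

import Mathlib

open scoped Classical

noncomputable section

open Cardinal

theorem exists_basis_superset {K A : Type*} [Field K] [CommRing A] [IsDomain A] [Algebra K A]
    {ι : Type*} {x : ι → A} (hx : AlgebraicIndependent K x) :
    ∃ s : Set A, Set.range x ⊆ s ∧ IsTranscendenceBasis K ((↑) : s → A) := by
  obtain ⟨s, hxs, hs⟩ := exists_maximal_algebraicIndependent (Set.range x) Set.univ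
    (Set.subset_univ _) hx.coe_range
  refine ⟨s, hxs, hs.1.1, fun t ht hst ↦ ?_⟩
  simp only [Subtype.range_coe_subtype, Set.setOf_mem_eq] at *
  exact hs.eq_of_le ⟨ht, Set.subset_univ _⟩ hst

theorem basis_card (s : Set ℂ) (hne : s.Nonempty)
    (hs : IsTranscendenceBasis ℚ ((↑) : s → ℂ)) : #s = 𝔠 := by
  haveI : Nonempty s := hne.to_subtype
  have := hs.lift_cardinalMk_eq_max_lift (F := ℚ) (E := ℂ)
  simp only [Cardinal.lift_id, mk_complex, Cardinal.mk_denumerable] at this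
  have h1 : #s ≤ 𝔠 := (mk_le_mk_of_subset (Set.subset_univ s)).trans (by simp [mk_complex])
  refine le_antisymm h1 ?_
  rcases le_total ℵ₀ #s with hle | hle
  · calc 𝔠 = ℵ₀ ⊔ #s ⊔ ℵ₀ := this
      _ ≤ #s := by simp [hle]
  · exfalso
    have : 𝔠 ≤ ℵ₀ := by
      calc 𝔠 = ℵ₀ ⊔ #s ⊔ ℵ₀ := this
        _ ≤ ℵ₀ := by simp [hle]
    exact absurd this (not_le.2 aleph0_lt_continuum)

section Aut
open IsAlgClosed

theorem equiv_apply_aux {ι κ : Type} {v : ι → ℂ} {w : κ → ℂ} (e : ι ≃ κ)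
    (hv : IsTranscendenceBasis ℚ v) (hw : IsTranscendenceBasis ℚ w) :
    ∃ σ : ℂ ≃+* ℂ, ∀ i, σ (v i) = w (e i) := by
  letI := isAlgClosure_of_transcendence_basis v hv
  letI := isAlgClosure_of_transcendence_basis w hw
  let f : Algebra.adjoin ℚ (Set.range v) ≃+* Algebra.adjoin ℚ (Set.range w) :=
    (hv.1.aevalEquiv.symm.trans ((MvPolynomial.renameEquiv ℚ e).trans hw.1.aevalEquiv)).toRingEquiv
  refine ⟨IsAlgClosure.equivOfEquiv ℂ ℂ f, fun i => ?_⟩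
  have h1 : algebraMap (Algebra.adjoin ℚ (Set.range v)) ℂ (hv.1.aevalEquiv (MvPolynomial.X i))
      = v i := by
    rw [hv.1.algebraMap_aevalEquiv]; simp
  rw [← h1, IsAlgClosure.equivOfEquiv_algebraMap]
  show algebraMap _ ℂ (hw.1.aevalEquiv ((MvPolynomial.renameEquiv ℚ e)
    (hv.1.aevalEquiv.symm (hv.1.aevalEquiv (MvPolynomial.X i))))) = w (e i)
  rw [AlgEquiv.symm_apply_apply]
  rw [show (MvPolynomial.renameEquiv ℚ e) (MvPolynomial.X i) = MvPolynomial.X (e i) by simp]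
  rw [hw.1.algebraMap_aevalEquiv]; simp

theorem exists_aut {ι : Type} [Finite ι] {x y : ι → ℂ}
    (hx : AlgebraicIndependent ℚ x) (hy : AlgebraicIndependent ℚ y) :
    ∃ σ : ℂ ≃+* ℂ, ∀ i, σ (x i) = y i := by
  cases isEmpty_or_nonempty ι with
  | inl h => exact ⟨RingEquiv.refl ℂ, fun i => isEmptyElim i⟩
  | inr h =>
  obtain ⟨s, hxs, hs⟩ := exists_basis_superset hx
  obtain ⟨t, hyt, ht⟩ := exists_basis_superset hy
  have hxinj : Function.Injective x := hx.injective
  have hyinj : Function.Injective y := hy.injective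
  have hsc : #s = 𝔠 := basis_card s ⟨x (Classical.arbitrary ι), hxs ⟨_, rfl⟩⟩ hs
  have htc : #t = 𝔠 := basis_card t ⟨y (Classical.arbitrary ι), hyt ⟨_, rfl⟩⟩ ht
  have hdiff : ∀ (u : Set ℂ) (r : Set ℂ), r ⊆ u → #u = 𝔠 → r.Finite →
      #(u \ r : Set ℂ) = 𝔠 := by
    intro u r hru huc hrf
    have hsum := Cardinal.mk_diff_add_mk hru
    rw [huc] at hsum
    refine le_antisymm ?_ ?_
    · rw [← huc]; exact Cardinal.mk_le_mk_of_subset Set.diff_subset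
    · by_contra hlt
      push_neg at hlt
      have h2 : #r < 𝔠 := lt_of_lt_of_le hrf.lt_aleph0 Cardinal.aleph0_le_continuum
      exact absurd hsum (ne_of_lt (Cardinal.add_lt_of_lt Cardinal.aleph0_le_continuum hlt h2))
  have h1 : #(s \ Set.range x : Set ℂ) = #(t \ Set.range y : Set ℂ) := by
    rw [hdiff s _ hxs hsc (Set.finite_range x), hdiff t _ hyt htc (Set.finite_range y)]
  obtain ⟨e0⟩ := Cardinal.eq.1 h1
  let ex : ι ≃ Set.range x := Equiv.ofInjective x hxinj
  let ey : ι ≃ Set.range y := Equiv.ofInjective y hyinj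
  classical
  let e : s ≃ t := ((Equiv.Set.sumDiffSubset hxs).symm.trans
    ((Equiv.sumCongr (ex.symm.trans ey) e0).trans (Equiv.Set.sumDiffSubset hyt)))
  obtain ⟨σ, hσ⟩ := equiv_apply_aux e hs ht
  refine ⟨σ, fun i => ?_⟩
  have hmem : x i ∈ s := hxs ⟨i, rfl⟩
  have he : e ⟨x i, hmem⟩ = ⟨y i, hyt ⟨i, rfl⟩⟩ := by
    show (Equiv.Set.sumDiffSubset hyt) ((Equiv.sumCongr (ex.symm.trans ey) e0)
      ((Equiv.Set.sumDiffSubset hxs).symm ⟨x i, hmem⟩)) = _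
    rw [Equiv.Set.sumDiffSubset_symm_apply_of_mem hxs (show ((⟨x i, hmem⟩ : s) : ℂ) ∈ Set.range x from ⟨i, rfl⟩)]
    simp only [Equiv.sumCongr_apply, Sum.map_inl, Equiv.Set.sumDiffSubset_apply_inl]
    apply Subtype.ext
    have h2 : ex.symm ⟨x i, ⟨i, rfl⟩⟩ = i := by
      apply ex.injective; simp [ex, Equiv.ofInjective]
      exact Function.leftInverse_invFun hxinj i
    simp only [Equiv.trans_apply, Set.coe_inclusion, h2]
    rfl
  have := hσ ⟨x i, hmem⟩
  rw [he] at this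
  exact this



/-- The subfield generated by a subfield `K` and an element `x`. -/
def Subfield.adjoinEl {F : Type*} [Field F] (K : Subfield F) (x : F) : Subfield F :=
  Subfield.closure (↑K ∪ {x})

/-- `M` is a radical extension of `K`: there is a tower
`K = K₁ ⊆ K₂ ⊆ … ⊆ K_t = M` with `K_{i+1} = K_i(x_i)` and `x_i ^ n_i ∈ K_i`. -/
def IsRadicalExtension {F : Type*} [Field F] (K M : Subfield F) : Prop :=
  ∃ t : ℕ, ∃ c : Fin (t + 1) → Subfield F,
    c 0 = K ∧ c (Fin.last t) = M ∧
    ∀ i : Fin t, ∃ x : F, ∃ n : ℕ, 0 < n ∧ x ^ n ∈ c i.castSucc ∧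
      c i.succ = (c i.castSucc).adjoinEl x

/-- `M` is a quadratic extension of `K`: a radical extension with all `n_i = 2`. -/
def IsQuadraticExtension {F : Type*} [Field F] (K M : Subfield F) : Prop :=
  ∃ t : ℕ, ∃ c : Fin (t + 1) → Subfield F,
    c 0 = K ∧ c (Fin.last t) = M ∧
    ∀ i : Fin t, ∃ x : F, x ^ 2 ∈ c i.castSucc ∧
      c i.succ = (c i.castSucc).adjoinEl x

/-- `L : K` is radically solvable if `L` is contained in a radical extension of `K`. -/
def RadicallySolvable {F : Type*} [Field F] (K L : Subfield F) : Prop :=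
  ∃ M : Subfield F, L ≤ M ∧ IsRadicalExtension K M

/-- `L : K` is quadratically solvable if `L` is contained in a quadratic extension of `K`. -/
def QuadraticallySolvable {F : Type*} [Field F] (K L : Subfield F) : Prop :=
  ∃ M : Subfield F, L ≤ M ∧ IsQuadraticExtension K M

/-- A finite graph: a finite set of vertices (natural numbers) and of edges. -/
structure NatGraph : Type where
  verts : Finset ℕ
  edges : Finset (Sym2 ℕ)

namespace NatGraph

/-- A graph is well-formed if it has no loops and edges join vertices. -/
def WellFormed (G : NatGraph) : Prop :=
  (∀ e ∈ G.edges, ¬ e.IsDiag) ∧ (∀ e ∈ G.edges, ∀ v ∈ e, v ∈ G.verts)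

def union (G H : NatGraph) : NatGraph := ⟨G.verts ∪ H.verts, G.edges ∪ H.edges⟩

def addEdge (G : NatGraph) (u v : ℕ) : NatGraph := ⟨G.verts, insert s(u, v) G.edges⟩

def deleteEdge (G : NatGraph) (e : Sym2 ℕ) : NatGraph := ⟨G.verts, G.edges.erase e⟩

end NatGraph

/-- `d_p(u,v) = a² + b²` where `(a,b) = p u - p v`. -/
def sqDist {R : Type*} [CommRing R] (p : ℕ → R × R) (u v : ℕ) : R :=
  ((p u).1 - (p v).1) ^ 2 + ((p u).2 - (p v).2) ^ 2

/-- Two frameworks are equivalent if corresponding edges have equal squared lengths. -/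
def FEquiv {R : Type*} [CommRing R] (G : NatGraph) (p q : ℕ → R × R) : Prop :=
  ∀ u v : ℕ, s(u, v) ∈ G.edges → sqDist p u v = sqDist q u v

/-- Two frameworks are congruent if all pairs of vertices have equal squared distances. -/
def FCong {R : Type*} [CommRing R] (G : NatGraph) (p q : ℕ → R × R) : Prop :=
  ∀ u ∈ G.verts, ∀ v ∈ G.verts, sqDist p u v = sqDist q u v

/-- A framework is generic if the coordinates of its points are
algebraically independent over `ℚ`. -/
def FGeneric {R : Type*} [CommRing R] [Algebra ℚ R] (G : NatGraph) (p : ℕ → R × R) : Prop :=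
  AlgebraicIndependent ℚ
    (fun vb : {x // x ∈ G.verts} × Bool => if vb.2 then (p vb.1.1).2 else (p vb.1.1).1)

/-- A complex framework is quasi-generic if it is congruent to a generic one. -/
def QuasiGeneric (G : NatGraph) (p : ℕ → ℂ × ℂ) : Prop :=
  ∃ p' : ℕ → ℂ × ℂ, FGeneric G p' ∧ FCong G p p'

/-- A real framework is rigid if all equivalent frameworks near it are congruent to it. -/
def RigidFramework (G : NatGraph) (p : ℕ → ℝ × ℝ) : Prop :=
  ∃ ε : ℝ, 0 < ε ∧ ∀ q : ℕ → ℝ × ℝ, FEquiv G p q →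
    (∀ v ∈ G.verts, ((p v).1 - (q v).1) ^ 2 + ((p v).2 - (q v).2) ^ 2 < ε) →
    FCong G p q

/-- A graph is rigid if every generic real realisation is rigid. -/
def NatGraph.Rigid (G : NatGraph) : Prop :=
  ∀ p : ℕ → ℝ × ℝ, FGeneric G p → RigidFramework G p

/-- A graph is minimally rigid if it is rigid but ceases to be so on deleting any edge. -/
def NatGraph.MinimallyRigid (G : NatGraph) : Prop :=
  G.Rigid ∧ ∀ e ∈ G.edges, ¬ (G.deleteEdge e).Rigid

/-- A graph is globally rigid if for every generic complex realisation every
equivalent realisation is congruent to it. -/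
def NatGraph.GloballyRigid (G : NatGraph) : Prop :=
  ∀ p : ℕ → ℂ × ℂ, FGeneric G p → ∀ q : ℕ → ℂ × ℂ, FEquiv G p q → FCong G p q

/-- `ℚ(p)`: the subfield of `ℂ` generated by the coordinates of the points of `p`. -/
def coordField (G : NatGraph) (p : ℕ → ℂ × ℂ) : Subfield ℂ :=
  Subfield.closure {z : ℂ | ∃ v ∈ G.verts, z = (p v).1 ∨ z = (p v).2}

/-- `ℚ(d_G(p))`: the subfield of `ℂ` generated by the squared edge lengths of `(G,p)`. -/
def distField (G : NatGraph) (p : ℕ → ℂ × ℂ) : Subfield ℂ :=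
  Subfield.closure {z : ℂ | ∃ u v : ℕ, s(u, v) ∈ G.edges ∧ z = sqDist p u v}

/-- A complex framework is radically solvable if some congruent framework `(G,q)`
has `ℚ(q) : ℚ(d_G(q))` radically solvable. -/
def RadSolvableFramework (G : NatGraph) (p : ℕ → ℂ × ℂ) : Prop :=
  ∃ q : ℕ → ℂ × ℂ, FCong G p q ∧ RadicallySolvable (distField G q) (coordField G q)

def QuadSolvableFramework (G : NatGraph) (p : ℕ → ℂ × ℂ) : Prop :=
  ∃ q : ℕ → ℂ × ℂ, FCong G p q ∧ QuadraticallySolvable (distField G q) (coordField G q)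

/-- A graph is radically solvable if every generic realisation is radically solvable. -/
def NatGraph.RadSolvable (G : NatGraph) : Prop :=
  ∀ p : ℕ → ℂ × ℂ, FGeneric G p → RadSolvableFramework G p

/-- A graph is quadratically solvable if every generic realisation is so. -/
def NatGraph.QuadSolvable (G : NatGraph) : Prop :=
  ∀ p : ℕ → ℂ × ℂ, FGeneric G p → QuadSolvableFramework G p

/-- Standard position with respect to `(v₁, v₂)`: `p v₁ = (0,0)` and `p v₂ = (0,z)`. -/
def StdPos (p : ℕ → ℂ × ℂ) (v₁ v₂ : ℕ) : Prop :=
  p v₁ = (0, 0) ∧ (p v₂).1 = 0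


section Transport

open Subfield

theorem sf_map_closure (σ : ℂ ≃+* ℂ) (S : Set ℂ) :
    (Subfield.closure S).map (σ : ℂ →+* ℂ) = Subfield.closure (σ '' S) := by
  apply le_antisymm
  · apply (Subfield.gc_map_comap (σ : ℂ →+* ℂ)).l_le
    rw [Subfield.closure_le]
    intro z hz
    exact Subfield.subset_closure (Set.mem_image_of_mem _ hz)
  · rw [Subfield.closure_le]
    rintro _ ⟨z, hz, rfl⟩
    exact Subfield.mem_map.2 ⟨z, Subfield.subset_closure hz, rfl⟩

theorem sf_map_adjoinEl (σ : ℂ ≃+* ℂ) (K : Subfield ℂ) (x : ℂ) :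
    (K.adjoinEl x).map (σ : ℂ →+* ℂ) = (K.map (σ : ℂ →+* ℂ)).adjoinEl (σ x) := by
  unfold Subfield.adjoinEl
  rw [sf_map_closure, Set.image_union, Set.image_singleton]
  rfl

theorem map_isRadical (σ : ℂ ≃+* ℂ) {K M : Subfield ℂ} (h : IsRadicalExtension K M) :
    IsRadicalExtension (K.map (σ : ℂ →+* ℂ)) (M.map (σ : ℂ →+* ℂ)) := by
  obtain ⟨t, c, h0, hl, hstep⟩ := h
  refine ⟨t, fun i => (c i).map (σ : ℂ →+* ℂ), by simp only [h0], by simp only [hl], fun i => ?_⟩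
  obtain ⟨x, n, hn, hxn, hc⟩ := hstep i
  refine ⟨σ x, n, hn, ?_, by simp only [hc]; exact sf_map_adjoinEl σ _ x⟩
  rw [← map_pow]
  exact Subfield.mem_map.2 ⟨x ^ n, hxn, rfl⟩

theorem map_isQuadratic (σ : ℂ ≃+* ℂ) {K M : Subfield ℂ} (h : IsQuadraticExtension K M) :
    IsQuadraticExtension (K.map (σ : ℂ →+* ℂ)) (M.map (σ : ℂ →+* ℂ)) := by
  obtain ⟨t, c, h0, hl, hstep⟩ := h
  refine ⟨t, fun i => (c i).map (σ : ℂ →+* ℂ), by simp only [h0], by simp only [hl], fun i => ?_⟩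
  obtain ⟨x, hxn, hc⟩ := hstep i
  refine ⟨σ x, ?_, by simp only [hc]; exact sf_map_adjoinEl σ _ x⟩
  rw [← map_pow]
  exact Subfield.mem_map.2 ⟨x ^ 2, hxn, rfl⟩

theorem map_radSolvable (σ : ℂ ≃+* ℂ) {K L : Subfield ℂ} (h : RadicallySolvable K L) :
    RadicallySolvable (K.map (σ : ℂ →+* ℂ)) (L.map (σ : ℂ →+* ℂ)) := by
  obtain ⟨M, hLM, hM⟩ := h
  exact ⟨M.map (σ : ℂ →+* ℂ), (Subfield.gc_map_comap _).monotone_l hLM, map_isRadical σ hM⟩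

theorem map_quadSolvable (σ : ℂ ≃+* ℂ) {K L : Subfield ℂ} (h : QuadraticallySolvable K L) :
    QuadraticallySolvable (K.map (σ : ℂ →+* ℂ)) (L.map (σ : ℂ →+* ℂ)) := by
  obtain ⟨M, hLM, hM⟩ := h
  exact ⟨M.map (σ : ℂ →+* ℂ), (Subfield.gc_map_comap _).monotone_l hLM, map_isQuadratic σ hM⟩

/-- apply `σ` to a framework componentwise -/
def mapFw (σ : ℂ ≃+* ℂ) (p : ℕ → ℂ × ℂ) : ℕ → ℂ × ℂ := fun v => (σ (p v).1, σ (p v).2)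

theorem sqDist_mapFw (σ : ℂ ≃+* ℂ) (p : ℕ → ℂ × ℂ) (u v : ℕ) :
    sqDist (mapFw σ p) u v = σ (sqDist p u v) := by
  simp [sqDist, mapFw, map_add, map_sub, map_pow]

theorem coordField_mapFw (σ : ℂ ≃+* ℂ) (G : NatGraph) (p : ℕ → ℂ × ℂ) :
    coordField G (mapFw σ p) = (coordField G p).map (σ : ℂ →+* ℂ) := by
  unfold coordField
  rw [sf_map_closure]
  congr 1
  ext z
  constructor
  · rintro ⟨v, hv, h | h⟩
    · exact ⟨(p v).1, ⟨v, hv, Or.inl rfl⟩, h.symm⟩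
    · exact ⟨(p v).2, ⟨v, hv, Or.inr rfl⟩, h.symm⟩
  · rintro ⟨w, ⟨v, hv, h | h⟩, rfl⟩
    · exact ⟨v, hv, Or.inl (by rw [h]; rfl)⟩
    · exact ⟨v, hv, Or.inr (by rw [h]; rfl)⟩

theorem distField_mapFw (σ : ℂ ≃+* ℂ) (G : NatGraph) (p : ℕ → ℂ × ℂ) :
    distField G (mapFw σ p) = (distField G p).map (σ : ℂ →+* ℂ) := by
  unfold distField
  rw [sf_map_closure]
  congr 1
  ext z
  constructor
  · rintro ⟨u, v, he, h⟩
    exact ⟨sqDist p u v, ⟨u, v, he, rfl⟩, by rw [h, sqDist_mapFw]⟩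
  · rintro ⟨w, ⟨u, v, he, rfl⟩, rfl⟩
    exact ⟨u, v, he, (sqDist_mapFw σ p u v).symm⟩

theorem radSolvable_transport (G : NatGraph) (p p' : ℕ → ℂ × ℂ) (σ : ℂ ≃+* ℂ)
    (h : ∀ v ∈ G.verts, p' v = mapFw σ p v) :
    RadSolvableFramework G p → RadSolvableFramework G p' := by
  rintro ⟨q, hq1, hq2⟩
  refine ⟨mapFw σ q, fun u hu v hv => ?_, ?_⟩
  · rw [sqDist_mapFw, ← hq1 u hu v hv]
    have : sqDist p' u v = sqDist (mapFw σ p) u v := by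
      unfold sqDist; rw [h u hu, h v hv]
    rw [this, sqDist_mapFw]
  · rw [coordField_mapFw, distField_mapFw]
    exact map_radSolvable σ hq2

theorem quadSolvable_transport (G : NatGraph) (p p' : ℕ → ℂ × ℂ) (σ : ℂ ≃+* ℂ)
    (h : ∀ v ∈ G.verts, p' v = mapFw σ p v) :
    QuadSolvableFramework G p → QuadSolvableFramework G p' := by
  rintro ⟨q, hq1, hq2⟩
  refine ⟨mapFw σ q, fun u hu v hv => ?_, ?_⟩
  · rw [sqDist_mapFw, ← hq1 u hu v hv]
    have : sqDist p' u v = sqDist (mapFw σ p) u v := by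
      unfold sqDist; rw [h u hu, h v hv]
    rw [this, sqDist_mapFw]
  · rw [coordField_mapFw, distField_mapFw]
    exact map_quadSolvable σ hq2

end Transport

/-- Lemma: radical (quadratic) solvability is a generic property: it does not depend
on the choice of the generic realisation of a rigid graph. -/

theorem statement10 (G : NatGraph) (hwf : G.WellFormed) (hrigid : G.Rigid)
    (p p' : ℕ → ℂ × ℂ) (hp : FGeneric G p) (hp' : FGeneric G p') :
    (RadSolvableFramework G p ↔ RadSolvableFramework G p') ∧
    (QuadSolvableFramework G p ↔ QuadSolvableFramework G p') := by
  set ι := ({x // x ∈ G.verts} × Bool)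
  obtain ⟨σ, hσ⟩ := exists_aut (x := fun vb : ι => if vb.2 then (p vb.1.1).2 else (p vb.1.1).1)
    (y := fun vb : ι => if vb.2 then (p' vb.1.1).2 else (p' vb.1.1).1) hp hp'
  have h : ∀ v ∈ G.verts, p' v = mapFw σ p v := by
    intro v hv
    have h1 := hσ ⟨⟨v, hv⟩, false⟩
    have h2 := hσ ⟨⟨v, hv⟩, true⟩
    simp only [if_true, if_false, Bool.false_eq_true] at h1 h2
    exact Prod.ext (by rw [← h1]; rfl) (by rw [← h2]; rfl)
  have h' : ∀ v ∈ G.verts, p v = mapFw σ.symm p' v := by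
    intro v hv
    simp [mapFw, h v hv]
  exact ⟨⟨radSolvable_transport G p p' σ h, radSolvable_transport G p' p σ.symm h'⟩,
    ⟨quadSolvable_transport G p p' σ h, quadSolvable_transport G p' p σ.symm h'⟩⟩
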